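/- If W is a symmetric countably syndetic subset of a topological group G, S is a countable subset of G such that G = ⋃_{g∈S} gW, and G₀ is a dense subgroup of G closed under each g ∈ S, then the set W₀ = {g ∈ G₀ : g ∈ W} is symmetric and countably syndetic in G₀. -/

import Mathlib

open Pointwise

/-- If `W` is a symmetric countably syndetic subset of a topological group `G`,
witnessed by the countable set `S` of translating elements, and `G₀` is a dense
subgroup containing `S`, then `W₀ = {g ∈ G₀ : g ∈ W}` is symmetric and countably
syndetic in `G₀`. -/
theorem trace_symmetric_countably_syndetic {G : Type*} [Group G] [TopologicalSpace G]
    [IsTopologicalGroup G]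
    (W : Set G) (hWsymm : W⁻¹ = W)
    (S : Set G) (hScount : S.Countable)
    (hcover : ∀ g : G, ∃ s ∈ S, g ∈ s • W)
    (G₀ : Subgroup G) (hdense : Dense (G₀ : Set G))
    (hclosed : S ⊆ (G₀ : Set G)) :
    (({g : G₀ | (g : G) ∈ W})⁻¹ = {g : G₀ | (g : G) ∈ W}) ∧
    ∃ a : ℕ → G₀, ∀ g : G₀, ∃ n, g ∈ a n • {g : G₀ | (g : G) ∈ W} := by
  constructor
  · ext g
    simp only [Set.mem_inv, Set.mem_setOf_eq]
    nth_rewrite 1 [← hWsymm]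
    simp [Set.mem_inv]
  · obtain ⟨s₀, hs₀, -⟩ := hcover 1
    obtain ⟨f, hf⟩ := hScount.exists_eq_range ⟨s₀, hs₀⟩
    refine ⟨fun n => ⟨f n, hclosed (hf ▸ Set.mem_range_self n)⟩, fun g => ?_⟩
    obtain ⟨s, hsS, hs⟩ := hcover g
    obtain ⟨n, rfl⟩ := hf ▸ hsS
    refine ⟨n, ?_⟩
    rw [Set.mem_smul_set_iff_inv_smul_mem] at hs ⊢
    simpa using hs
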